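/- Let (G, λ, Δ) be a Δ-periodic temporal graph and let P = (v_1, …, v_k) be the underlying path of a fastest temporal path from v_1 to v_k such that for every i, the prefix (v_1, …, v_i) is a fastest temporal path from v_1 to v_i. Letting D_{1,i} denote the duration of a fastest temporal path from v_1 to v_i, the travel delay at each internal vertex satisfies τ_{v_i}^{v_{i−1} v_{i+1}} = D_{1,i+1} − D_{1,i} for all 2 ≤ i ≤ k−1. -/

import Mathlib

open SimpleGraph

/-- The residue of `a - b` modulo `Δ`, taken in `{1, …, Δ}` (value `Δ` when `a ≡ b`). -/
def resDelta (Δ : ℕ) (a b : ℤ) : ℤ :=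
  if (a - b) % (Δ : ℤ) = 0 then (Δ : ℤ) else (a - b) % (Δ : ℤ)

/-- In the Δ-periodic temporal graph `(G, lab, Δ)`, edge `e` is active at time `t`. -/
def Active {V : Type*} (G : SimpleGraph V) (Δ : ℕ) (lab : Sym2 V → ℤ)
    (e : Sym2 V) (t : ℤ) : Prop :=
  e ∈ G.edgeSet ∧ 1 ≤ t ∧ t ≡ lab e [ZMOD (Δ : ℤ)]

/-- The labeling assigns every edge a label in `{1, …, Δ}`. -/
def ValidLab {V : Type*} (G : SimpleGraph V) (Δ : ℕ) (lab : Sym2 V → ℤ) : Prop :=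
  ∀ e ∈ G.edgeSet, lab e ∈ Finset.Icc (1 : ℤ) (Δ : ℤ)

/-- `times` is a valid schedule of strictly increasing activation times for the walk `W`. -/
def IsTemporalWalk {V : Type*} (G : SimpleGraph V) (Δ : ℕ) (lab : Sym2 V → ℤ)
    {u v : V} (W : G.Walk u v) (times : List ℤ) : Prop :=
  List.Forall₂ (fun e t => Active G Δ lab e t) W.edges times ∧ times.Chain' (· < ·)

/-- Duration of a temporal path with the given traversal times. -/
def duration (times : List ℤ) : ℤ := times.getLast! - times.head! + 1

/-- There is a temporal path from `u` to `v` of duration `d`. -/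
def HasDur {V : Type*} (G : SimpleGraph V) (Δ : ℕ) (lab : Sym2 V → ℤ)
    (u v : V) (d : ℤ) : Prop :=
  ∃ (W : G.Walk u v) (times : List ℤ), W.IsPath ∧ times ≠ [] ∧
    IsTemporalWalk G Δ lab W times ∧ duration times = d

/-- `d` is the duration of a fastest temporal path from `u` to `v`. -/
def IsFastest {V : Type*} (G : SimpleGraph V) (Δ : ℕ) (lab : Sym2 V → ℤ)
    (u v : V) (d : ℤ) : Prop :=
  HasDur G Δ lab u v d ∧ ∀ d', HasDur G Δ lab u v d' → d ≤ d'

/-! ### Auxiliary material -/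

lemma getLast!_append_singleton (l : List ℤ) (a : ℤ) : (l ++ [a]).getLast! = a := by
  induction l with
  | nil => rfl
  | cons x xs ih =>
    cases hxs : xs ++ [a] with
    | nil => simp at hxs
    | cons y ys =>
      rw [List.cons_append, hxs, List.getLast!, List.getLast_cons (by simp),
        ← List.getLast!, ← hxs, ih]

/-- The walk `vtx 0, vtx 1, …, vtx n` in `G`. -/
def mkWalk {V : Type*} (G : SimpleGraph V) (vtx : ℕ → V) :
    ∀ n, (∀ j, j < n → G.Adj (vtx j) (vtx (j + 1))) → G.Walk (vtx 0) (vtx n)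
  | 0, _ => .nil
  | n + 1, h => (mkWalk G vtx n fun j hj => h j (by omega)).concat (h n (by omega))

lemma mkWalk_edges {V : Type*} (G : SimpleGraph V) (vtx : ℕ → V) (n : ℕ)
    (h : ∀ j, j < n → G.Adj (vtx j) (vtx (j + 1))) :
    (mkWalk G vtx n h).edges = (List.range n).map (fun j => s(vtx j, vtx (j + 1))) := by
  induction n with
  | zero => rfl
  | succ m ih =>
    rw [mkWalk, SimpleGraph.Walk.edges_concat, ih, List.range_succ]
    simp

lemma mkWalk_support {V : Type*} (G : SimpleGraph V) (vtx : ℕ → V) (n : ℕ)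
    (h : ∀ j, j < n → G.Adj (vtx j) (vtx (j + 1))) :
    (mkWalk G vtx n h).support = (List.range (n + 1)).map vtx := by
  induction n with
  | zero => rfl
  | succ m ih =>
    rw [mkWalk, SimpleGraph.Walk.support_concat, ih, List.range_succ (n := m + 1)]
    simp

/-- Key construction: a strictly increasing, active schedule along `vtx 0, …, vtx n`
yields a temporal path of the corresponding duration. -/
lemma hasDur_of_schedule {V : Type*} (G : SimpleGraph V) (Δ : ℕ) (lab : Sym2 V → ℤ)
    (vtx : ℕ → V) (s : ℕ → ℤ) (n : ℕ) (hn : 1 ≤ n)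
    (hact : ∀ j, j < n → Active G Δ lab s(vtx j, vtx (j + 1)) (s j))
    (hmono : ∀ a b, a < b → b < n → s a < s b)
    (hnodup : ∀ i j, i ≤ n → j ≤ n → vtx i = vtx j → i = j) :
    HasDur G Δ lab (vtx 0) (vtx n) (s (n - 1) - s 0 + 1) := by
  have hadj : ∀ j, j < n → G.Adj (vtx j) (vtx (j + 1)) := fun j hj =>
    (SimpleGraph.mem_edgeSet _).mp (hact j hj).1
  refine ⟨mkWalk G vtx n hadj, (List.range n).map s, ?_, ?_, ⟨?_, ?_⟩, ?_⟩
  · rw [SimpleGraph.Walk.isPath_def, mkWalk_support]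
    refine List.Nodup.map_on ?_ List.nodup_range
    intro a ha b hb hab
    exact hnodup a b (by simpa using Nat.lt_succ_iff.mp (List.mem_range.mp ha))
      (by simpa using Nat.lt_succ_iff.mp (List.mem_range.mp hb)) hab
  · simp only [ne_eq, List.map_eq_nil_iff, List.range_eq_nil]
    omega
  · rw [mkWalk_edges]
    rw [List.forall₂_map_left_iff, List.forall₂_map_right_iff, List.forall₂_same]
    intro j hj
    exact hact j (List.mem_range.mp hj)
  · refine List.Pairwise.isChain ?_
    rw [List.pairwise_map]
    refine (List.pairwise_lt_range (n := n)).imp_of_mem ?_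
    intro a b _ hb hab
    exact hmono a b hab (List.mem_range.mp hb)
  · obtain ⟨m, rfl⟩ : ∃ m, n = m + 1 := ⟨n - 1, by omega⟩
    rw [duration]
    have h1 : ((List.range (m + 1)).map s).getLast! = s m := by
      rw [List.range_succ, List.map_append]
      exact getLast!_append_singleton _ _
    have h2 : ((List.range (m + 1)).map s).head! = s 0 := by
      rw [List.range_succ_eq_map]
      rfl
    rw [h1, h2]
    simp

lemma resDelta_eq {Δ : ℕ} (hΔ : 1 ≤ Δ) {a b g : ℤ} (h1 : 1 ≤ g) (h2 : g ≤ (Δ : ℤ))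
    (hcong : (a - b) % (Δ : ℤ) = g % (Δ : ℤ)) : resDelta Δ a b = g := by
  rw [resDelta, hcong]
  rcases eq_or_lt_of_le h2 with rfl | hlt
  · simp
  · rw [Int.emod_eq_of_lt (by omega) hlt, if_neg (by omega)]

theorem stmt3 {V : Type*} (G : SimpleGraph V) (Δ : ℕ) (hΔ : 1 ≤ Δ)
    (lab : Sym2 V → ℤ) (hval : ValidLab G Δ lab)
    (k : ℕ) (hk : 2 ≤ k) (vtx : ℕ → V) (t : ℕ → ℤ) (D : ℕ → ℤ)
    (hinj : ∀ i j, i ≤ k - 1 → j ≤ k - 1 → vtx i = vtx j → i = j)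
    (hactive : ∀ i, i ≤ k - 2 → Active G Δ lab s(vtx i, vtx (i + 1)) (t i))
    (hmono : ∀ i j, i < j → j ≤ k - 2 → t i < t j)
    (hD : ∀ i, 1 ≤ i → i ≤ k - 1 → D i = t (i - 1) - t 0 + 1)
    (hfast : ∀ i, 1 ≤ i → i ≤ k - 1 → IsFastest G Δ lab (vtx 0) (vtx i) (D i)) :
    ∀ i, 1 ≤ i → i ≤ k - 2 →
      resDelta Δ (lab s(vtx i, vtx (i + 1))) (lab s(vtx (i - 1), vtx i)) = D (i + 1) - D i := by
  intro i hi1 hi2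
  -- rewrite the RHS
  have hDi : D i = t (i - 1) - t 0 + 1 := hD i hi1 (by omega)
  have hDi1 : D (i + 1) = t i - t 0 + 1 := by
    have := hD (i + 1) (by omega) (by omega)
    simpa using this
  have hdiff : D (i + 1) - D i = t i - t (i - 1) := by rw [hDi, hDi1]; ring
  obtain ⟨m, hm⟩ : ∃ m, i = m + 1 := ⟨i - 1, by omega⟩
  subst hm
  simp only [Nat.add_sub_cancel] at *
  -- basic facts
  have hg1 : 1 ≤ t (m + 1) - t m := by
    have := hmono m (m + 1) (by omega) hi2
    omega
  have hacti := hactive (m + 1) hi2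
  have hactm := hactive m (by omega)
  -- congruence
  have hcong : (lab s(vtx (m + 1), vtx (m + 2)) - lab s(vtx m, vtx (m + 1))) % (Δ : ℤ)
      = (t (m + 1) - t m) % (Δ : ℤ) := by
    have h1 := hacti.2.2
    have h2 := hactm.2.2
    have : t (m + 1) - t m ≡ lab s(vtx (m + 1), vtx (m + 2)) - lab s(vtx m, vtx (m + 1))
        [ZMOD (Δ : ℤ)] := Int.ModEq.sub h1 h2
    exact this.symm
  -- upper bound via fastestness
  have hgΔ : t (m + 1) - t m ≤ (Δ : ℤ) := by
    by_contra hlt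
    push_neg at hlt
    -- build a faster schedule to vtx (m + 2)
    set s : ℕ → ℤ := fun j => if j ≤ m then t j else t (m + 1) - (Δ : ℤ) with hs
    have hdur : HasDur G Δ lab (vtx 0) (vtx (m + 2)) (s (m + 1) - s 0 + 1) := by
      refine hasDur_of_schedule G Δ lab vtx s (m + 2) (by omega) ?_ ?_ ?_
      · intro j hj
        rcases Nat.lt_or_ge j (m + 1) with h | h
        · have : s j = t j := by simp [hs]; omega
          rw [this]
          exact hactive j (by omega)
        · have hj' : j = m + 1 := by omega
          subst hj'
          have heq : s (m + 1) = t (m + 1) - (Δ : ℤ) := by simp [hs]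
          have htm : (1 : ℤ) ≤ t m := hactm.2.1
          rw [heq]
          refine ⟨hacti.1, by omega, ?_⟩
          have hz : (Δ : ℤ) ≡ 0 [ZMOD (Δ : ℤ)] := (Int.modEq_zero_iff_dvd ..).mpr dvd_rfl
          have hsub : t (m + 1) - (Δ : ℤ) ≡ t (m + 1) [ZMOD (Δ : ℤ)] := by
            simpa using (Int.ModEq.refl (t (m + 1))).sub hz
          exact hsub.trans hacti.2.2
      · intro a b hab hb
        rcases Nat.lt_or_ge b (m + 1) with h | h
        · have hsa : s a = t a := by simp [hs]; omega
          have hsb : s b = t b := by simp [hs]; omega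
          rw [hsa, hsb]
          exact hmono a b hab (by omega)
        · have hb' : b = m + 1 := by omega
          subst hb'
          have hsa : s a = t a := by simp [hs]; omega
          have hsb : s (m + 1) = t (m + 1) - (Δ : ℤ) := by simp [hs]
          rw [hsa, hsb]
          have : t a ≤ t m := by
            rcases Nat.lt_or_ge a m with h' | h'
            · exact le_of_lt (hmono a m h' (by omega))
            · have : a = m := by omega
              subst this; exact le_refl _
          omega
      · intro a b ha hb
        exact hinj a b (by omega) (by omega)
    have hle := (hfast (m + 2) (by omega) (by omega)).2 _ hdur
    have hs0 : s 0 = t 0 := by simp [hs]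
    have hsm1 : s (m + 1) = t (m + 1) - (Δ : ℤ) := by simp [hs]
    rw [hs0, hsm1, hDi1] at hle
    omega
  rw [hdiff]
  exact resDelta_eq hΔ hg1 hgΔ hcong
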